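/- Let R be a valuation domain with value group ℤ × ℤ (lexicographic order), x ∈ R with v(x) = (0,1), y ∈ R with v(y) = (1,0), and S = {xⁱ : i ≥ 0}. Let M = ∏_{i≥1} R/xⁱR and m = (1̄, 1̄, …) ∈ M. Then the image of m in M_S is nonzero (since xⁱm ≠ 0 for all i), but y·m maps to 0 in M_S; hence M_S has a nonzero torsion element, M_S is not a flat R_S-module, and M is not an S-flat R-module. -/

import Mathlib

/-- The lexicographic order on `ℤ × ℤ`. -/
def lexLe (a b : ℤ × ℤ) : Prop := a.1 < b.1 ∨ (a.1 = b.1 ∧ a.2 ≤ b.2)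

/-- For a valuation domain `R` with value group `ℤ × ℤ` (lex), `v x = (0,1)`,
`v y = (1,0)`, `S = {xⁱ}`, and `M = ∏_{i ≥ 1} R/xⁱR` with `m = (1̄, 1̄, …)`: `xⁱ • m ≠ 0`
for all `i`, the image of `m` in `M_S` is nonzero, `y • m` maps to `0` in `M_S`; hence
`M_S` is not a flat `R_S`-module and `M` is not `S`-flat. -/
theorem stmt9 {R : Type*} [CommRing R] [IsDomain R] [ValuationRing R]
    (v : R → ℤ × ℤ)
    (hdvd : ∀ a b : R, a ≠ 0 → b ≠ 0 → (a ∣ b ↔ lexLe (v a) (v b)))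
    (hmul : ∀ a b : R, a ≠ 0 → b ≠ 0 → v (a * b) = v a + v b)
    (x y : R) (hx : x ≠ 0) (hy : y ≠ 0)
    (hvx : v x = (0, 1)) (hvy : v y = (1, 0)) :
    ∀ m : (∀ i : ℕ, R ⧸ Ideal.span {x ^ (i + 1)}),
      (m = fun i => Submodule.Quotient.mk 1) →
      (∀ i : ℕ, x ^ i • m ≠ 0) ∧
      LocalizedModule.mkLinearMap (Submonoid.powers x) (∀ i : ℕ, R ⧸ Ideal.span {x ^ (i + 1)}) m ≠ 0 ∧
      LocalizedModule.mkLinearMap (Submonoid.powers x) (∀ i : ℕ, R ⧸ Ideal.span {x ^ (i + 1)}) (y • m) = 0 ∧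
      ¬ Module.Flat (Localization (Submonoid.powers x))
          (LocalizedModule (Submonoid.powers x) (∀ i : ℕ, R ⧸ Ideal.span {x ^ (i + 1)})) := by
  intro m hm
  have h1 : (1 : R) ≠ 0 := one_ne_zero
  have hv1 : v 1 = 0 := by
    have h := hmul 1 1 h1 h1
    rw [mul_one] at h
    have : v 1 + 0 = v 1 + v 1 := by rw [add_zero]; exact h
    exact (add_left_cancel this).symm
  have hvxn : ∀ n : ℕ, v (x ^ n) = (0, (n : ℤ)) := by
    intro n
    induction n with
    | zero => simpa [Prod.ext_iff] using hv1
    | succ n ih =>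
      rw [pow_succ, hmul _ _ (pow_ne_zero n hx) hx, ih, hvx]
      simp [Prod.ext_iff]
  have hnd : ∀ i : ℕ, ¬ (x ^ (i + 1) ∣ x ^ i) := by
    intro i hd
    rw [hdvd _ _ (pow_ne_zero _ hx) (pow_ne_zero _ hx), hvxn, hvxn] at hd
    rcases hd with h | ⟨_, h⟩
    · exact absurd h (lt_irrefl 0)
    · omega
  have hyd : ∀ i : ℕ, x ^ (i + 1) ∣ y := by
    intro i
    rw [hdvd _ _ (pow_ne_zero _ hx) hy, hvxn, hvy]
    left; norm_num
  have part1 : ∀ i : ℕ, x ^ i • m ≠ 0 := by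
    intro i h0
    have hco := congrFun h0 i
    rw [hm] at hco
    simp only [Pi.smul_apply, Pi.zero_apply] at hco
    rw [← Submodule.Quotient.mk_smul, smul_eq_mul, mul_one,
      Submodule.Quotient.mk_eq_zero, Ideal.mem_span_singleton] at hco
    exact hnd i hco
  have part3' : y • m = 0 := by
    funext i
    rw [hm]
    simp only [Pi.smul_apply, Pi.zero_apply]
    rw [← Submodule.Quotient.mk_smul, smul_eq_mul, mul_one,
      Submodule.Quotient.mk_eq_zero, Ideal.mem_span_singleton]
    exact hyd i
  have part2 : LocalizedModule.mkLinearMap (Submonoid.powers x)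
      (∀ i : ℕ, R ⧸ Ideal.span {x ^ (i + 1)}) m ≠ 0 := by
    intro h0
    have hker : m ∈ LinearMap.ker (LocalizedModule.mkLinearMap (Submonoid.powers x)
        (∀ i : ℕ, R ⧸ Ideal.span {x ^ (i + 1)})) := h0
    rw [LocalizedModule.mem_ker_mkLinearMap_iff] at hker
    obtain ⟨r, hr, hr0⟩ := hker
    obtain ⟨k, rfl⟩ := hr
    exact part1 k hr0
  refine ⟨part1, part2, ?_, ?_⟩
  · rw [part3', map_zero]
  · intro hflat
    set A := Localization (Submonoid.powers x)
    set N := LocalizedModule (Submonoid.powers x) (∀ i : ℕ, R ⧸ Ideal.span {x ^ (i + 1)})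
    have hle : Submonoid.powers x ≤ nonZeroDivisors R :=
      powers_le_nonZeroDivisors_of_noZeroDivisors hx
    have : IsDomain A := IsLocalization.isDomain_localization hle
    have hinj : Function.Injective (algebraMap R A) := IsLocalization.injective A hle
    set r : A := algebraMap R A y with hrdef
    have hr0 : r ≠ 0 := by
      intro h
      apply hy
      apply hinj
      rw [map_zero, ← hrdef, h]
    have hreg : IsSMulRegular A r := by
      intro a b hab
      simp only [smul_eq_mul] at hab
      exact mul_left_cancel₀ hr0 hab
    have hregN : IsSMulRegular N r := by
      have h2 : IsSMulRegular (TensorProduct A N A) r := hreg.lTensor N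
      intro a b hab
      have hab' : r • a = r • b := hab
      have e := TensorProduct.rid A N
      have h3 : e.symm (r • a) = e.symm (r • b) := by rw [hab']
      rw [LinearEquiv.map_smul, LinearEquiv.map_smul] at h3
      exact e.symm.injective (h2 h3)
    have hsm : r • (LocalizedModule.mkLinearMap (Submonoid.powers x)
        (∀ i : ℕ, R ⧸ Ideal.span {x ^ (i + 1)}) m) = 0 := by
      rw [hrdef, algebraMap_smul, ← map_smul, part3', map_zero]
    have := hregN (show r • (LocalizedModule.mkLinearMap (Submonoid.powers x)
        (∀ i : ℕ, R ⧸ Ideal.span {x ^ (i + 1)}) m) = r • (0 : N) by rw [smul_zero, hsm])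
    exact part2 this
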